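/- arXiv:1708.01957 — 2 statements merged into one kernel-verified Lean document; each statement's English description precedes it below -/
import Mathlib

section
/- For every integer L ≥ 1, the series Σ_{s≥1} (−1)^{s+1} q^s/(q^s;q)_{L+1} has non-negative power series coefficients; equivalently, for every N ≥ 1, the sum of (−1)^{s(π)+1} over partitions π of N with l(π) − s(π) ≤ L is non-negative. -/
open PowerSeries

/-- `(q^s; q)_n` as a formal power series in `q = X` over `ℚ`. -/
noncomputable def qp (s n : ℕ) : PowerSeries ℚ :=
  ∏ i ∈ Finset.range n, (1 - (X : PowerSeries ℚ) ^ (s + i))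

/-- Multiplicity vectors of partitions of `N` into parts from `[s, s+n-1]`. -/
def Aset (s n N : ℕ) : Finset (Fin n → ℕ) :=
  (Fintype.piFinset fun _ : Fin n => Finset.range (N + 1)).filter
    (fun f => ∑ i : Fin n, (s + (i : ℕ)) * f i = N)

lemma mem_Aset {s n N : ℕ} (hs : 1 ≤ s) {f : Fin n → ℕ} :
    f ∈ Aset s n N ↔ ∑ i : Fin n, (s + (i : ℕ)) * f i = N := by
  constructor
  · intro h; exact (Finset.mem_filter.mp h).2
  · intro h
    refine Finset.mem_filter.mpr ⟨Fintype.mem_piFinset.mpr fun i => ?_, h⟩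
    rw [Finset.mem_range, Nat.lt_succ_iff]
    calc f i ≤ (s + (i : ℕ)) * f i := Nat.le_mul_of_pos_left _ (by omega)
      _ ≤ ∑ j : Fin n, (s + (j : ℕ)) * f j :=
          Finset.single_le_sum (f := fun j : Fin n => (s + (j : ℕ)) * f j)
            (fun j _ => Nat.zero_le _) (Finset.mem_univ i)
      _ = N := h

lemma Aset_zero (s N : ℕ) : (Aset s 0 N).card = if N = 0 then 1 else 0 := by
  rcases eq_or_ne N 0 with rfl | h
  · rw [if_pos rfl]
    have : Aset s 0 0 = {fun i => i.elim0} := by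
      ext f
      simp only [Aset, Finset.mem_filter, Fintype.mem_piFinset, Finset.mem_singleton]
      constructor
      · intro _; funext i; exact i.elim0
      · rintro rfl
        exact ⟨fun i => i.elim0, by simp⟩
    rw [this, Finset.card_singleton]
  · rw [if_neg h, Finset.card_eq_zero]
    ext f
    simp only [Aset, Finset.mem_filter, Finset.notMem_empty, iff_false, not_and]
    intro _ hsum
    exact absurd (by simpa using hsum.symm) h

lemma Aset_succ_card (s n N : ℕ) (hs : 1 ≤ s) :
    (Aset s (n + 1) N).card
      = (Aset (s + 1) n N).card +
        (if s ≤ N then (Aset s (n + 1) (N - s)).card else 0) := by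
  classical
  have hs1 : (1 : ℕ) ≤ s + 1 := Nat.succ_le_succ (Nat.zero_le s)
  -- second piece
  have h1 : ((Aset s (n + 1) N).filter (fun f => ¬ f 0 = 0)).card
      = if s ≤ N then (Aset s (n + 1) (N - s)).card else 0 := by
    split_ifs with hsN
    · refine Finset.card_bij' (fun f _ => Function.update f 0 (f 0 - 1))
        (fun g _ => Function.update g 0 (g 0 + 1)) ?_ ?_ ?_ ?_
      · intro f hf
        obtain ⟨hf1, hf2⟩ := Finset.mem_filter.mp hf
        have hsum := (mem_Aset hs).mp hf1
        rw [Fin.sum_univ_succ] at hsum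
        have hf0 : 1 ≤ f 0 := Nat.pos_of_ne_zero hf2
        obtain ⟨c, hc⟩ : ∃ c, f 0 = c + 1 := ⟨f 0 - 1, by omega⟩
        rw [mem_Aset hs, Fin.sum_univ_succ]
        have e0 : Function.update f 0 (f 0 - 1) 0 = c := by
          rw [Function.update_self, hc]; omega
        have es : ∀ i : Fin n, Function.update f 0 (f 0 - 1) i.succ = f i.succ := fun i =>
          Function.update_of_ne (Fin.succ_ne_zero i) _ _
        rw [e0]
        simp only [es]
        simp only [Fin.val_zero, add_zero] at hsum ⊢
        rw [hc] at hsum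
        have hmul : s * (c + 1) = s * c + s := by ring
        omega
      · intro g hg
        have hsum := (mem_Aset hs).mp hg
        rw [Fin.sum_univ_succ] at hsum
        have e0 : Function.update g 0 (g 0 + 1) 0 = g 0 + 1 := Function.update_self _ _ _
        have es : ∀ i : Fin n, Function.update g 0 (g 0 + 1) i.succ = g i.succ := fun i =>
          Function.update_of_ne (Fin.succ_ne_zero i) _ _
        refine Finset.mem_filter.mpr ⟨(mem_Aset hs).mpr ?_, by rw [e0]; omega⟩
        rw [Fin.sum_univ_succ, e0]
        simp only [es]
        simp only [Fin.val_zero, add_zero] at hsum ⊢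
        have hmul : s * (g 0 + 1) = s * g 0 + s := by ring
        omega
      · intro f hf
        obtain ⟨_, hf2⟩ := Finset.mem_filter.mp hf
        have hf0 : 1 ≤ f 0 := Nat.pos_of_ne_zero hf2
        show Function.update (Function.update f 0 (f 0 - 1)) 0
            (Function.update f 0 (f 0 - 1) 0 + 1) = f
        funext x
        rcases eq_or_ne x 0 with rfl | hx
        · rw [Function.update_self]
          rw [Function.update_self]
          omega
        · rw [Function.update_of_ne hx, Function.update_of_ne hx]
      · intro g _
        show Function.update (Function.update g 0 (g 0 + 1)) 0
            (Function.update g 0 (g 0 + 1) 0 - 1) = g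
        funext x
        rcases eq_or_ne x 0 with rfl | hx
        · rw [Function.update_self]
          rw [Function.update_self]
          omega
        · rw [Function.update_of_ne hx, Function.update_of_ne hx]
    · rw [Finset.card_eq_zero]
      ext f
      simp only [Finset.mem_filter, Finset.notMem_empty, iff_false, not_and]
      intro hf1 hf2
      have hsum := (mem_Aset hs).mp hf1
      rw [Fin.sum_univ_succ] at hsum
      have hf0 : 1 ≤ f 0 := Nat.pos_of_ne_zero hf2
      have hB : s * f 0 ≤ N := by
        rw [← hsum]; simp only [Fin.val_zero, add_zero]; exact Nat.le_add_right _ _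
      have hB2 : s ≤ s * f 0 := Nat.le_mul_of_pos_right _ (Nat.pos_of_ne_zero hf2)
      omega
  -- first piece: f 0 = 0 ↔ Aset (s+1) n N
  have h0 : ((Aset s (n + 1) N).filter (fun f => f 0 = 0)).card = (Aset (s + 1) n N).card := by
    refine Finset.card_bij' (fun f _ => Fin.tail f) (fun g _ => Fin.cons 0 g) ?_ ?_ ?_ ?_
    · intro f hf
      obtain ⟨hf1, hf2⟩ := Finset.mem_filter.mp hf
      have hsum := (mem_Aset hs).mp hf1
      rw [Fin.sum_univ_succ] at hsum
      rw [mem_Aset hs1]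
      rw [hf2, mul_zero, zero_add] at hsum
      rw [← hsum]
      exact Finset.sum_congr rfl fun i _ => by
        simp only [Fin.tail, Fin.val_succ]; ring_nf
    · intro g hg
      have hsum := (mem_Aset hs1).mp hg
      refine Finset.mem_filter.mpr ⟨(mem_Aset hs).mpr ?_, by simp⟩
      rw [Fin.sum_univ_succ]
      simp only [Fin.cons_zero, Fin.cons_succ, mul_zero, zero_add]
      rw [← hsum]
      exact Finset.sum_congr rfl fun i _ => by
        simp only [Fin.val_succ]; ring_nf
    · intro f hf
      obtain ⟨_, hf2⟩ := Finset.mem_filter.mp hf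
      show Fin.cons 0 (Fin.tail f) = f
      rw [← hf2]
      exact Fin.cons_self_tail f
    · intro g _
      funext i
      exact Fin.cons_succ (α := fun _ : Fin (n+1) => ℕ) 0 g i
  have hsplit : ((Aset s (n + 1) N).filter (fun f => f 0 = 0)).card
      + ((Aset s (n + 1) N).filter (fun f => ¬ f 0 = 0)).card
      = (Aset s (n + 1) N).card :=
    Finset.card_filter_add_card_filter_not _
  rw [← hsplit, h0, h1]

/-- The counting power series: the inverse of `qp s n`. -/
noncomputable def Pse (s n : ℕ) : PowerSeries ℚ :=
  PowerSeries.mk fun N => ((Aset s n N).card : ℚ)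

lemma qp_mul_Pse : ∀ n s : ℕ, 1 ≤ s → qp s n * Pse s n = 1 := by
  intro n
  induction n with
  | zero =>
    intro s hs
    have h1 : qp s 0 = 1 := by simp [qp]
    have h2 : Pse s 0 = 1 := by
      ext N
      rw [Pse, coeff_mk, coeff_one, Aset_zero]
      split_ifs <;> simp
    rw [h1, h2, one_mul]
  | succ n ih =>
    intro s hs
    have hqp : qp s (n + 1) = qp (s + 1) n * (1 - X ^ s) := by
      rw [qp, qp, Finset.prod_range_succ']
      have hpr : (∏ i ∈ Finset.range n, (1 - (X : PowerSeries ℚ) ^ (s + (i + 1))))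
          = ∏ i ∈ Finset.range n, (1 - (X : PowerSeries ℚ) ^ (s + 1 + i)) :=
        Finset.prod_congr rfl fun i _ => by
          have h : s + (i + 1) = s + 1 + i := by omega
          rw [h]
      rw [hpr]
      rfl
    have hkey : (1 - X ^ s) * Pse s (n + 1) = Pse (s + 1) n := by
      ext M
      have hc := Aset_succ_card s n M hs
      rw [sub_mul, one_mul, map_sub]
      simp only [Pse, coeff_mk, PowerSeries.coeff_X_pow_mul']
      rw [hc]
      split_ifs with h
      all_goals push_cast
      all_goals try ring
    rw [hqp, mul_assoc, hkey]
    exact ih (s + 1) (Nat.succ_le_succ (Nat.zero_le s))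

lemma constCoeff_qp (s n : ℕ) (hs : 1 ≤ s) : constantCoeff (qp s n) = 1 := by
  rw [qp, map_prod]
  refine Finset.prod_eq_one fun i _ => ?_
  rw [map_sub, map_one, map_pow, constantCoeff_X, zero_pow (by omega), sub_zero]

lemma qp_inv (s n : ℕ) (hs : 1 ≤ s) : (qp s n)⁻¹ = Pse s n := by
  rw [PowerSeries.inv_eq_iff_mul_eq_one]
  · rw [mul_comm]; exact qp_mul_Pse n s hs
  · rw [constCoeff_qp s n hs]; exact one_ne_zero

/-- The injection: sends `(s, f)` (multiplicities of a partition of `N` with smallest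
part `s ≥ 2`, window of width `K+2`) to a multiplicity vector of a partition of `N` with
smallest part `1` and window `[1, K+2]`. -/
def Phi (K : ℕ) (p : Σ _ : ℕ, (Fin (K + 2) → ℕ)) : Fin (K + 2) → ℕ :=
  Fin.cons
    ((∑ j : Fin (K + 1), p.2 j.succ)
      + (p.2 0 + 1 + ∑ j : Fin (K + 1), p.2 j.succ) * (p.1 - 2) + 1)
    (Fin.cons (p.2 0 + p.2 1) (fun i => p.2 i.succ.succ))

lemma Phi_zero (K : ℕ) (p : Σ _ : ℕ, (Fin (K + 2) → ℕ)) :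
    Phi K p 0 = (∑ j : Fin (K + 1), p.2 j.succ)
      + (p.2 0 + 1 + ∑ j : Fin (K + 1), p.2 j.succ) * (p.1 - 2) + 1 := by
  simp only [Phi, Fin.cons_zero]

lemma Phi_one (K : ℕ) (p : Σ _ : ℕ, (Fin (K + 2) → ℕ)) :
    Phi K p 1 = p.2 0 + p.2 1 := by
  simp only [Phi]
  rw [← Fin.succ_zero_eq_one, Fin.cons_succ, Fin.cons_zero]

lemma Phi_ss (K : ℕ) (p : Σ _ : ℕ, (Fin (K + 2) → ℕ)) (i : Fin K) :
    Phi K p i.succ.succ = p.2 i.succ.succ := by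
  simp only [Phi]
  rw [Fin.cons_succ, Fin.cons_succ]

lemma sum_peel2 {K : ℕ} (h : Fin (K + 2) → ℕ) :
    ∑ i, h i = h 0 + h 1 + ∑ i : Fin K, h i.succ.succ := by
  simp only [Fin.sum_univ_succ, Fin.succ_zero_eq_one]
  omega

lemma fin_ss_ne_zero {K : ℕ} (i : Fin K) : (i.succ.succ : Fin (K + 2)) ≠ 0 :=
  Fin.succ_ne_zero _

lemma fin_ss_ne_one {K : ℕ} (i : Fin K) : (i.succ.succ : Fin (K + 2)) ≠ 1 := by
  refine Fin.ne_of_val_ne ?_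
  simp only [Fin.val_succ, Fin.val_one]
  omega

lemma fin_one_ne_zero {K : ℕ} : (1 : Fin (K + 2)) ≠ 0 := by
  refine Fin.ne_of_val_ne ?_
  simp only [Fin.val_one, Fin.val_zero]
  omega

lemma key_card (K N : ℕ) :
    ∑ s ∈ (Finset.Icc 1 N).filter (fun s => Even s), (Aset s (K + 2) (N - s)).card
      ≤ (Aset 1 (K + 2) (N - 1)).card := by
  classical
  rw [← Finset.card_sigma]
  refine Finset.card_le_card_of_injOn (Phi K) ?_ ?_
  · -- maps into the target
    rintro ⟨s, f⟩ hp
    obtain ⟨hs, hf⟩ := Finset.mem_sigma.mp hp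
    dsimp only at hs hf
    obtain ⟨hsI, hsE⟩ := Finset.mem_filter.mp hs
    obtain ⟨hs1', hsN⟩ := Finset.mem_Icc.mp hsI
    have hs2 : 2 ≤ s := by obtain ⟨m, hm⟩ := hsE; omega
    obtain ⟨t, rfl⟩ : ∃ t, s = t + 2 := ⟨s - 2, by omega⟩
    obtain ⟨M, rfl⟩ : ∃ M, N = M + (t + 2) := ⟨N - (t + 2), by omega⟩
    have hsum : ∑ i : Fin (K + 2), ((t + 2) + (i : ℕ)) * f i = M := by
      have h := (mem_Aset (show (1 : ℕ) ≤ t + 2 by omega)).mp hf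
      rwa [Nat.add_sub_cancel] at h
    rw [Finset.mem_coe, mem_Aset (le_refl 1)]
    have hgoalR : M + (t + 2) - 1 = M + t + 1 := by omega
    rw [hgoalR]
    set A := ∑ i : Fin K, f i.succ.succ with hA
    set B := ∑ i : Fin K, (i : ℕ) * f i.succ.succ with hB
    have hS1 : (∑ j : Fin (K + 1), f j.succ) = f 1 + A := by
      rw [Fin.sum_univ_succ, Fin.succ_zero_eq_one]
    -- decompose the source sum
    have h1 : ((t + 2) + ((0 : Fin (K + 2)) : ℕ)) * f 0
        + ((t + 2) + ((1 : Fin (K + 2)) : ℕ)) * f 1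
        + (∑ i : Fin K, ((t + 2) + ((i.succ.succ : Fin (K + 2)) : ℕ)) * f i.succ.succ)
        = M := (sum_peel2 _).symm.trans hsum
    simp only [Fin.val_zero, add_zero, Fin.val_one, Fin.val_succ] at h1
    have h2 : ∑ i : Fin K, ((t + 2) + ((i : ℕ) + 1 + 1)) * f i.succ.succ
        = (t + 4) * A + B := by
      rw [hA, hB, Finset.mul_sum, ← Finset.sum_add_distrib]
      exact Finset.sum_congr rfl fun i _ => by ring
    rw [h2] at h1
    -- h1 : (t+2) * f 0 + (t+2+1) * f 1 + ((t+4)*A + B) = M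
    -- decompose the target sum
    have e0 : Phi K ⟨t + 2, f⟩ 0 = (f 1 + A) + (f 0 + 1 + (f 1 + A)) * t + 1 := by
      rw [Phi_zero]
      simp only
      rw [hS1, Nat.add_sub_cancel]
    have e1 : Phi K ⟨t + 2, f⟩ 1 = f 0 + f 1 := Phi_one K _
    have e2 : ∀ i : Fin K, Phi K ⟨t + 2, f⟩ i.succ.succ = f i.succ.succ := fun i =>
      Phi_ss K _ i
    have hPhiSum : (∑ i : Fin (K + 2), (1 + (i : ℕ)) * Phi K ⟨t + 2, f⟩ i)
        = (f 1 + A + (f 0 + 1 + (f 1 + A)) * t + 1) + 2 * (f 0 + f 1) + (3 * A + B) := by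
      rw [sum_peel2 (fun i : Fin (K + 2) => (1 + (i : ℕ)) * Phi K ⟨t + 2, f⟩ i)]
      rw [e0, e1]
      have h4 : (∑ i : Fin K,
          (1 + ((i.succ.succ : Fin (K + 2)) : ℕ)) * Phi K ⟨t + 2, f⟩ i.succ.succ)
          = 3 * A + B := by
        rw [hA, hB, Finset.mul_sum, ← Finset.sum_add_distrib]
        refine Finset.sum_congr rfl fun i _ => ?_
        rw [Phi_ss]
        simp only [Fin.val_succ]
        ring
      rw [h4]
      simp only [Fin.val_zero, Fin.val_one]
      ring
    rw [hPhiSum]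
    have hfin : (f 1 + A + (f 0 + 1 + (f 1 + A)) * t + 1) + 2 * (f 0 + f 1) + (3 * A + B)
        = ((t + 2) * f 0 + (t + 2 + 1) * f 1 + ((t + 4) * A + B)) + t + 1 := by ring
    rw [hfin, h1]
  · -- injectivity
    rintro ⟨s, f⟩ hp ⟨s', f'⟩ hp' heq
    simp only [Finset.coe_sigma, Set.mem_sigma_iff] at hp hp'
    obtain ⟨hs, hf⟩ := hp
    obtain ⟨hs', hf'⟩ := hp'
    rw [Finset.mem_coe, Finset.mem_filter, Finset.mem_Icc] at hs hs'
    have hs2 : 2 ≤ s := by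
      obtain ⟨⟨hx, _⟩, hE⟩ := hs; obtain ⟨m, hm⟩ := hE; omega
    have hs2' : 2 ≤ s' := by
      obtain ⟨⟨hx, _⟩, hE⟩ := hs'; obtain ⟨m, hm⟩ := hE; omega
    have htail : ∀ i : Fin K, f i.succ.succ = f' i.succ.succ := by
      intro i
      have hcf := congrFun heq i.succ.succ
      rwa [Phi_ss, Phi_ss] at hcf
    have hA : (∑ i : Fin K, f i.succ.succ) = ∑ i : Fin K, f' i.succ.succ :=
      Finset.sum_congr rfl fun i _ => htail i
    have h1 : f 0 + f 1 = f' 0 + f' 1 := by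
      have hcf := congrFun heq 1
      rwa [Phi_one, Phi_one] at hcf
    have hS1 : (∑ j : Fin (K + 1), f j.succ) = f 1 + ∑ i : Fin K, f i.succ.succ := by
      rw [Fin.sum_univ_succ, Fin.succ_zero_eq_one]
    have hS1' : (∑ j : Fin (K + 1), f' j.succ) = f' 1 + ∑ i : Fin K, f' i.succ.succ := by
      rw [Fin.sum_univ_succ, Fin.succ_zero_eq_one]
    have h0 := congrFun heq 0
    rw [Phi_zero, Phi_zero] at h0
    set S1 : ℕ := ∑ j : Fin (K + 1), f j.succ with hS1d
    set S1' : ℕ := ∑ j : Fin (K + 1), f' j.succ with hS1d'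
    set R : ℕ := f 0 + 1 + S1 with hR
    set R' : ℕ := f' 0 + 1 + S1' with hR'
    have hRR : R = R' := by
      rw [hR, hR', hS1, hS1']
      omega
    have hS1R : S1 < R' := by rw [← hRR, hR, hS1]; omega
    have hS1R' : S1' < R' := by rw [hR', hS1']; omega
    rw [hRR] at h0
    -- h0 : S1 + R' * (s - 2) + 1 = S1' + R' * (s' - 2) + 1
    have h0' : S1 + R' * (s - 2) = S1' + R' * (s' - 2) := Nat.add_right_cancel h0
    have hmod : S1 = S1' := by
      have hc := congrArg (fun x => x % R') h0'
      simpa [Nat.add_mul_mod_self_left, Nat.mod_eq_of_lt hS1R,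
        Nat.mod_eq_of_lt hS1R'] using hc
    have hss : s = s' := by
      rw [hmod] at h0'
      have hX : R' * (s - 2) = R' * (s' - 2) := Nat.add_left_cancel h0'
      have hRpos : 0 < R' := by rw [hR']; omega
      have := Nat.eq_of_mul_eq_mul_left hRpos hX
      omega
    have hf1 : f 1 = f' 1 := by
      rw [hS1, hS1'] at hmod
      omega
    have hf0 : f 0 = f' 0 := by omega
    have hff : f = f' := by
      funext x
      induction x using Fin.cases with
      | zero => exact hf0
      | succ j =>
        induction j using Fin.cases with
        | zero => rw [Fin.succ_zero_eq_one]; exact hf1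
        | succ j' => exact htail j'
    subst hss hff
    rfl

/-- **Theorem 1.3.** For `L ≥ 1`, the series `Σ_{s ≥ 1} (-1)^{s+1} q^s/(q^s;q)_{L+1}` has
non-negative coefficients. Since the summand indexed by `s` has order at least `s` in `q`,
the coefficient of `q^N` equals the finite sum over `1 ≤ s ≤ N`. -/
theorem stmt10 (L : ℕ) (hL : 1 ≤ L) (N : ℕ) :
    0 ≤ ∑ s ∈ Finset.Icc 1 N,
        coeff N ((-1) ^ (s + 1) * (X : PowerSeries ℚ) ^ s * (qp s (L + 1))⁻¹) := by
  classical
  obtain ⟨K, rfl⟩ : ∃ K, L = K + 1 := ⟨L - 1, by omega⟩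
  have key : ∀ s ∈ Finset.Icc 1 N,
      coeff N ((-1) ^ (s + 1) * (X : PowerSeries ℚ) ^ s * (qp s (K + 1 + 1))⁻¹)
        = (-1 : ℚ) ^ (s + 1) * ((Aset s (K + 1 + 1) (N - s)).card : ℚ) := by
    intro s hsm
    obtain ⟨h1, h2⟩ := Finset.mem_Icc.mp hsm
    rw [qp_inv s (K + 1 + 1) h1, mul_assoc]
    have hC : ((-1 : PowerSeries ℚ)) ^ (s + 1) = C ((-1 : ℚ) ^ (s + 1)) := by
      rw [map_pow, map_neg, map_one]
    have hco : coeff N ((X : PowerSeries ℚ) ^ s * Pse s (K + 1 + 1))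
        = ((Aset s (K + 1 + 1) (N - s)).card : ℚ) := by
      have hx := PowerSeries.coeff_X_pow_mul (Pse s (K + 1 + 1)) s (N - s)
      rw [Nat.sub_add_cancel h2] at hx
      rw [hx, Pse, coeff_mk]
    rw [hC, coeff_C_mul, hco]
  rw [Finset.sum_congr rfl key]
  rcases Nat.eq_zero_or_pos N with rfl | hN
  · simp
  rw [← Finset.sum_filter_add_sum_filter_not (Finset.Icc 1 N) (fun s => Even s)]
  have hev : ∑ s ∈ (Finset.Icc 1 N).filter (fun s => Even s),
      (-1 : ℚ) ^ (s + 1) * ((Aset s (K + 1 + 1) (N - s)).card : ℚ)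
      = - ∑ s ∈ (Finset.Icc 1 N).filter (fun s => Even s),
          ((Aset s (K + 1 + 1) (N - s)).card : ℚ) := by
    rw [← Finset.sum_neg_distrib]
    refine Finset.sum_congr rfl fun s hsm => ?_
    have hE : Even s := (Finset.mem_filter.mp hsm).2
    have hodd : Odd (s + 1) := Even.add_one hE
    rw [hodd.neg_one_pow]
    ring
  have hodd : ∑ s ∈ (Finset.Icc 1 N).filter (fun s => ¬ Even s),
      (-1 : ℚ) ^ (s + 1) * ((Aset s (K + 1 + 1) (N - s)).card : ℚ)
      = ∑ s ∈ (Finset.Icc 1 N).filter (fun s => ¬ Even s),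
          ((Aset s (K + 1 + 1) (N - s)).card : ℚ) := by
    refine Finset.sum_congr rfl fun s hsm => ?_
    have hO : ¬ Even s := (Finset.mem_filter.mp hsm).2
    have hEv : Even (s + 1) := (Nat.not_even_iff_odd.mp hO).add_one
    rw [hEv.neg_one_pow, one_mul]
  rw [hev, hodd]
  have hle1 : ∑ s ∈ (Finset.Icc 1 N).filter (fun s => Even s),
      ((Aset s (K + 1 + 1) (N - s)).card : ℚ)
      ≤ ((Aset 1 (K + 1 + 1) (N - 1)).card : ℚ) := by
    have h := key_card K N
    calc ∑ s ∈ (Finset.Icc 1 N).filter (fun s => Even s),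
        ((Aset s (K + 1 + 1) (N - s)).card : ℚ)
        = ((∑ s ∈ (Finset.Icc 1 N).filter (fun s => Even s),
            (Aset s (K + 1 + 1) (N - s)).card : ℕ) : ℚ) := by push_cast; rfl
      _ ≤ ((Aset 1 (K + 1 + 1) (N - 1)).card : ℚ) := by exact_mod_cast h
  have hle2 : ((Aset 1 (K + 1 + 1) (N - 1)).card : ℚ)
      ≤ ∑ s ∈ (Finset.Icc 1 N).filter (fun s => ¬ Even s),
          ((Aset s (K + 1 + 1) (N - s)).card : ℚ) := by
    refine Finset.single_le_sum (f := fun s => ((Aset s (K + 1 + 1) (N - s)).card : ℚ))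
      (fun i _ => by positivity) ?_
    rw [Finset.mem_filter, Finset.mem_Icc]
    exact ⟨⟨le_refl 1, hN⟩, by simp⟩
  linarith
end

section
/- For every positive integer L, the identity Σ_{n≥1} (q^n/(1+q^n)) · C(L+n−1, n−1)_q = Σ_{s≥1} (−1)^{s+1} q^s/(q^s;q)_{L+1} holds as formal power series in q. -/
open PowerSeries

/-- `(-q; q)_n` as a formal power series in `q = X` over `ℚ`. -/
noncomputable def np (n : ℕ) : PowerSeries ℚ :=
  ∏ i ∈ Finset.range n, (1 + (X : PowerSeries ℚ) ^ (i + 1))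

/-- The Gaussian binomial coefficient `C(m, k)_q = (q;q)_m / ((q;q)_k (q;q)_{m-k})`. -/
noncomputable def gb (m k : ℕ) : PowerSeries ℚ := qp 1 m * (qp 1 k)⁻¹ * (qp 1 (m - k))⁻¹

lemma qp_cc (s n : ℕ) (hs : 1 ≤ s) : constantCoeff (R := ℚ) (qp s n) = 1 := by
  unfold qp
  rw [map_prod]
  apply Finset.prod_eq_one
  intro i _
  rw [map_sub, map_one, map_pow, constantCoeff_X, zero_pow (by omega : s + i ≠ 0), sub_zero]

lemma qp_cc_ne (s n : ℕ) (hs : 1 ≤ s) : constantCoeff (R := ℚ) (qp s n) ≠ 0 := by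
  rw [qp_cc s n hs]; norm_num

lemma qp_ne (s n : ℕ) (hs : 1 ≤ s) : qp s n ≠ 0 := by
  intro h
  have := qp_cc s n hs
  rw [h, map_zero] at this
  norm_num at this

lemma qp_mul_inv (s n : ℕ) (hs : 1 ≤ s) : qp s n * (qp s n)⁻¹ = 1 :=
  PowerSeries.mul_inv_cancel _ (qp_cc_ne s n hs)

lemma qp_succ (s n : ℕ) : qp s (n + 1) = qp s n * (1 - (X : PowerSeries ℚ) ^ (s + n)) :=
  Finset.prod_range_succ _ n

lemma qp_zero (s : ℕ) : qp s 0 = 1 := Finset.prod_range_zero _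

lemma gb_zero (m : ℕ) : gb m 0 = 1 := by
  unfold gb
  rw [Nat.sub_zero, qp_zero, inv_one, mul_one, qp_mul_inv 1 m le_rfl]

lemma gb_diag (n : ℕ) : gb n n = 1 := by
  unfold gb
  rw [Nat.sub_self, qp_zero, inv_one, mul_one, qp_mul_inv 1 n le_rfl]

lemma gb_pascal (a b : ℕ) :
    gb (a + b + 2) (a + 1)
      = gb (a + b + 1) (a + 1) + (X : PowerSeries ℚ) ^ (b + 1) * gb (a + b + 1) a := by
  unfold gb
  rw [show a + b + 2 - (a + 1) = b + 1 by omega, show a + b + 1 - (a + 1) = b by omega,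
    show a + b + 1 - a = b + 1 by omega]
  have hA1 := qp_mul_inv 1 (a + 1) le_rfl
  have hB1 := qp_mul_inv 1 (b + 1) le_rfl
  have hA := qp_mul_inv 1 a le_rfl
  have hB := qp_mul_inv 1 b le_rfl
  have eA1 : qp 1 (a + 1) = qp 1 a * (1 - (X : PowerSeries ℚ) ^ (1 + a)) := qp_succ 1 a
  have eB1 : qp 1 (b + 1) = qp 1 b * (1 - (X : PowerSeries ℚ) ^ (1 + b)) := qp_succ 1 b
  have eP : qp 1 (a + b + 2) = qp 1 (a + b + 1) * (1 - (X : PowerSeries ℚ) ^ (1 + (a + b + 1))) := by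
    have := qp_succ 1 (a + b + 1); rw [show a + b + 1 + 1 = a + b + 2 by omega] at this
    exact this
  have hc : qp 1 (a + 1) * qp 1 (b + 1) ≠ 0 :=
    mul_ne_zero (qp_ne 1 (a + 1) le_rfl) (qp_ne 1 (b + 1) le_rfl)
  refine mul_right_cancel₀ hc ?_
  linear_combination
    (qp 1 (a + b + 2) * qp 1 (b + 1) * (qp 1 (b + 1))⁻¹) * hA1
    + qp 1 (a + b + 2) * hB1
    - (qp 1 (a + b + 1) * (qp 1 (a + 1))⁻¹ * qp 1 (a + 1) * (qp 1 b)⁻¹) * eB1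
    - (qp 1 (a + b + 1) * (qp 1 (a + 1))⁻¹ * qp 1 (a + 1) * (1 - (X : PowerSeries ℚ) ^ (1 + b))) * hB
    - (qp 1 (a + b + 1) * (1 - (X : PowerSeries ℚ) ^ (1 + b))) * hA1
    - ((X : PowerSeries ℚ) ^ (b + 1) * qp 1 (a + b + 1) * (qp 1 a)⁻¹ * qp 1 (a + 1)) * hB1
    - ((X : PowerSeries ℚ) ^ (b + 1) * qp 1 (a + b + 1) * (qp 1 a)⁻¹) * eA1
    - ((X : PowerSeries ℚ) ^ (b + 1) * qp 1 (a + b + 1) * (1 - (X : PowerSeries ℚ) ^ (1 + a))) * hA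
    + eP
lemma step_sum (s L N : ℕ) :
    (1 - (X : PowerSeries ℚ) ^ (s + (L + 1)))
        * (∑ n ∈ Finset.range (N + 1), (X : PowerSeries ℚ) ^ (s * n) * gb (L + 1 + n) n)
      = (∑ n ∈ Finset.range (N + 1), (X : PowerSeries ℚ) ^ (s * n) * gb (L + n) n)
        - (X : PowerSeries ℚ) ^ (s * (N + 1))
            * ((X : PowerSeries ℚ) ^ (L + 1) * gb (L + 1 + N) N) := by
  have hA : (∑ n ∈ Finset.range (N + 1), (X : PowerSeries ℚ) ^ (s * n) * gb (L + 1 + n) n)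
      = 1 + ((∑ n ∈ Finset.range N, (X : PowerSeries ℚ) ^ (s * (n + 1)) * gb (L + (n + 1)) (n + 1))
        + ∑ n ∈ Finset.range N,
            (X : PowerSeries ℚ) ^ (s * (n + 1)) * ((X : PowerSeries ℚ) ^ (L + 1) * gb (L + (n + 1)) n)) := by
    rw [Finset.sum_range_succ']
    have h0 : (X : PowerSeries ℚ) ^ (s * 0) * gb (L + 1 + 0) 0 = 1 := by
      rw [Nat.mul_zero, pow_zero, one_mul, gb_zero]
    rw [h0]
    rw [show (∑ n ∈ Finset.range N, (X : PowerSeries ℚ) ^ (s * (n + 1)) * gb (L + 1 + (n + 1)) (n + 1))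
        = (∑ n ∈ Finset.range N, ((X : PowerSeries ℚ) ^ (s * (n + 1)) * gb (L + (n + 1)) (n + 1)
          + (X : PowerSeries ℚ) ^ (s * (n + 1)) * ((X : PowerSeries ℚ) ^ (L + 1) * gb (L + (n + 1)) n))) from
      Finset.sum_congr rfl fun i _ => by
        rw [show L + 1 + (i + 1) = i + L + 2 by omega, gb_pascal i L,
          show i + L + 1 = L + (i + 1) by omega, mul_add]]
    rw [Finset.sum_add_distrib]
    ring
  have hF : (∑ n ∈ Finset.range (N + 1), (X : PowerSeries ℚ) ^ (s * n) * gb (L + n) n)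
      = 1 + ∑ n ∈ Finset.range N, (X : PowerSeries ℚ) ^ (s * (n + 1)) * gb (L + (n + 1)) (n + 1) := by
    rw [Finset.sum_range_succ']
    rw [show (X : PowerSeries ℚ) ^ (s * 0) * gb (L + 0) 0 = 1 by
      rw [Nat.mul_zero, pow_zero, one_mul, gb_zero]]
    ring
  have hXA : (X : PowerSeries ℚ) ^ (s + (L + 1))
        * (∑ n ∈ Finset.range (N + 1), (X : PowerSeries ℚ) ^ (s * n) * gb (L + 1 + n) n)
      = (∑ n ∈ Finset.range N,
            (X : PowerSeries ℚ) ^ (s * (n + 1)) * ((X : PowerSeries ℚ) ^ (L + 1) * gb (L + (n + 1)) n))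
        + (X : PowerSeries ℚ) ^ (s * (N + 1)) * ((X : PowerSeries ℚ) ^ (L + 1) * gb (L + 1 + N) N) := by
    rw [Finset.mul_sum, Finset.sum_range_succ]
    congr 1
    · refine Finset.sum_congr rfl fun i _ => ?_
      rw [show L + 1 + i = L + (i + 1) by omega]
      rw [← mul_assoc, ← pow_add, ← mul_assoc, ← pow_add,
        show s + (L + 1) + s * i = s * (i + 1) + (L + 1) by ring]
    · rw [← mul_assoc, ← pow_add, ← mul_assoc, ← pow_add,
        show s + (L + 1) + s * N = s * (N + 1) + (L + 1) by ring]
  linear_combination hA - hXA - hF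

lemma key (s N : ℕ) (hs : 1 ≤ s) (L : ℕ) :
    ∃ G : PowerSeries ℚ,
      qp s (L + 1) * (∑ n ∈ Finset.range (N + 1), (X : PowerSeries ℚ) ^ (s * n) * gb (L + n) n)
        = 1 + (X : PowerSeries ℚ) ^ (s * (N + 1)) * G := by
  induction L with
  | zero =>
    refine ⟨-1, ?_⟩
    have e : qp s 1 = 1 - (X : PowerSeries ℚ) ^ s := by
      rw [show (1 : ℕ) = 0 + 1 from rfl, qp_succ, qp_zero, one_mul, Nat.add_zero]
    rw [e]
    rw [show (∑ n ∈ Finset.range (N + 1), (X : PowerSeries ℚ) ^ (s * n) * gb (0 + n) n)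
        = ∑ n ∈ Finset.range (N + 1), ((X : PowerSeries ℚ) ^ s) ^ n from
      Finset.sum_congr rfl fun i _ => by
        rw [Nat.zero_add, gb_diag, mul_one, pow_mul]]
    have := mul_geom_sum ((X : PowerSeries ℚ) ^ s) (N + 1)
    rw [pow_mul]
    linear_combination -this
  | succ L ih =>
    obtain ⟨G, hG⟩ := ih
    refine ⟨G - qp s (L + 1) * ((X : PowerSeries ℚ) ^ (L + 1) * gb (L + 1 + N) N), ?_⟩
    have e : qp s (L + 1 + 1) = qp s (L + 1) * (1 - (X : PowerSeries ℚ) ^ (s + (L + 1))) :=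
      qp_succ s (L + 1)
    calc qp s (L + 1 + 1) * (∑ n ∈ Finset.range (N + 1), (X : PowerSeries ℚ) ^ (s * n) * gb (L + 1 + n) n)
        = qp s (L + 1) * ((1 - (X : PowerSeries ℚ) ^ (s + (L + 1)))
            * (∑ n ∈ Finset.range (N + 1), (X : PowerSeries ℚ) ^ (s * n) * gb (L + 1 + n) n)) := by
          rw [e]; ring
      _ = qp s (L + 1) * ((∑ n ∈ Finset.range (N + 1), (X : PowerSeries ℚ) ^ (s * n) * gb (L + n) n)
            - (X : PowerSeries ℚ) ^ (s * (N + 1)) * ((X : PowerSeries ℚ) ^ (L + 1) * gb (L + 1 + N) N)) := by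
          rw [step_sum]
      _ = 1 + (X : PowerSeries ℚ) ^ (s * (N + 1))
            * (G - qp s (L + 1) * ((X : PowerSeries ℚ) ^ (L + 1) * gb (L + 1 + N) N)) := by
          linear_combination hG
lemma coeff_zero_of_lt {k N : ℕ} (h : N < k) (f : PowerSeries ℚ) :
    coeff (R := ℚ) N ((X : PowerSeries ℚ) ^ k * f) = 0 := by
  rw [coeff_X_pow_mul', if_neg (by omega)]

lemma coeff_neg_one_pow (k N : ℕ) (f : PowerSeries ℚ) :
    coeff (R := ℚ) N ((-1 : PowerSeries ℚ) ^ k * f) = (-1 : ℚ) ^ k * coeff (R := ℚ) N f := by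
  have h : ((-1 : PowerSeries ℚ)) ^ k = C (R := ℚ) ((-1 : ℚ) ^ k) := by
    rw [map_pow, map_neg, map_one]
  rw [h, coeff_C_mul]

lemma rhs_expand (s L N : ℕ) (hs : 1 ≤ s) :
    coeff (R := ℚ) N ((X : PowerSeries ℚ) ^ s * (qp s (L + 1))⁻¹)
      = ∑ n ∈ Finset.Icc 1 N,
          coeff (R := ℚ) N ((X : PowerSeries ℚ) ^ (s * n) * gb (L + n - 1) (n - 1)) := by
  obtain ⟨G, hG⟩ := key s N hs L
  have hinv := qp_mul_inv s (L + 1) hs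
  have hiq : (qp s (L + 1))⁻¹
      = (∑ n ∈ Finset.range (N + 1), (X : PowerSeries ℚ) ^ (s * n) * gb (L + n) n)
        - (X : PowerSeries ℚ) ^ (s * (N + 1)) * (G * (qp s (L + 1))⁻¹) := by
    linear_combination (-(qp s (L + 1))⁻¹) * hG
      + (∑ n ∈ Finset.range (N + 1), (X : PowerSeries ℚ) ^ (s * n) * gb (L + n) n) * hinv
  have h2 : coeff (R := ℚ) N ((X : PowerSeries ℚ) ^ s
      * ((X : PowerSeries ℚ) ^ (s * (N + 1)) * (G * (qp s (L + 1))⁻¹))) = 0 := by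
    rw [← mul_assoc, ← pow_add]
    refine coeff_zero_of_lt ?_ _
    have := Nat.le_mul_of_pos_left (N + 1) (show 0 < s by omega)
    omega
  rw [hiq, mul_sub, map_sub, h2, sub_zero, Finset.mul_sum, map_sum, Finset.sum_range_succ]
  have hlast : coeff (R := ℚ) N ((X : PowerSeries ℚ) ^ s
      * ((X : PowerSeries ℚ) ^ (s * N) * gb (L + N) N)) = 0 := by
    rw [← mul_assoc, ← pow_add]
    refine coeff_zero_of_lt ?_ _
    have := Nat.le_mul_of_pos_left N (show 0 < s by omega)
    omega
  rw [hlast, add_zero, ← Finset.Ico_add_one_right_eq_Icc, Finset.sum_Ico_eq_sum_range]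
  refine Finset.sum_congr rfl fun i _ => ?_
  rw [← mul_assoc, ← pow_add, show s + s * i = s * (1 + i) by ring,
    show L + (1 + i) - 1 = L + i by omega, show 1 + i - 1 = i by omega]

lemma lhs_expand (n N : ℕ) (hn : 1 ≤ n) (Gb : PowerSeries ℚ) :
    coeff (R := ℚ) N ((X : PowerSeries ℚ) ^ n * (1 + X ^ n)⁻¹ * Gb)
      = ∑ s ∈ Finset.Icc 1 N,
          (-1 : ℚ) ^ (s + 1) * coeff (R := ℚ) N ((X : PowerSeries ℚ) ^ (s * n) * Gb) := by
  have hcc : constantCoeff (R := ℚ) (1 + (X : PowerSeries ℚ) ^ n) ≠ 0 := by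
    rw [map_add, map_one, map_pow, constantCoeff_X, zero_pow (by omega : n ≠ 0), add_zero]
    norm_num
  have hinv : (1 + (X : PowerSeries ℚ) ^ n) * (1 + (X : PowerSeries ℚ) ^ n)⁻¹ = 1 :=
    PowerSeries.mul_inv_cancel _ hcc
  have hgeom := mul_geom_sum (-(X : PowerSeries ℚ) ^ n) N
  have hiq : (1 + (X : PowerSeries ℚ) ^ n)⁻¹
      = (∑ i ∈ Finset.range N, (-(X : PowerSeries ℚ) ^ n) ^ i)
        + (-(X : PowerSeries ℚ) ^ n) ^ N * (1 + (X : PowerSeries ℚ) ^ n)⁻¹ := by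
    linear_combination ((1 + (X : PowerSeries ℚ) ^ n)⁻¹) * hgeom
      + (∑ i ∈ Finset.range N, (-(X : PowerSeries ℚ) ^ n) ^ i) * hinv
  have e1 : (X : PowerSeries ℚ) ^ n * (1 + X ^ n)⁻¹ * Gb
      = (∑ i ∈ Finset.range N, (-(X : PowerSeries ℚ) ^ n) ^ i) * ((X : PowerSeries ℚ) ^ n * Gb)
        + (-(X : PowerSeries ℚ) ^ n) ^ N
            * ((X : PowerSeries ℚ) ^ n * ((1 + (X : PowerSeries ℚ) ^ n)⁻¹ * Gb)) := by
    linear_combination ((X : PowerSeries ℚ) ^ n * Gb) * hiq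
  rw [e1, map_add]
  have h2 : coeff (R := ℚ) N ((-(X : PowerSeries ℚ) ^ n) ^ N
      * ((X : PowerSeries ℚ) ^ n * ((1 + (X : PowerSeries ℚ) ^ n)⁻¹ * Gb))) = 0 := by
    rw [neg_pow, mul_assoc, coeff_neg_one_pow, ← pow_mul, ← mul_assoc, ← pow_add]
    rw [coeff_zero_of_lt (by nlinarith) _, mul_zero]
  rw [h2, add_zero, Finset.sum_mul, map_sum]
  rw [← Finset.Ico_add_one_right_eq_Icc, Finset.sum_Ico_eq_sum_range]
  refine Finset.sum_congr rfl fun i _ => ?_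
  rw [neg_pow, mul_assoc, coeff_neg_one_pow, ← pow_mul, ← mul_assoc, ← pow_add,
    show n * i + n = (1 + i) * n by ring, show ((-1 : ℚ)) ^ (1 + i + 1) = (-1) ^ i by ring]

/-- **Identity (6.1).** For `L ≥ 1`,
`Σ_{n ≥ 1} (q^n/(1+q^n)) C(L+n-1, n-1)_q = Σ_{s ≥ 1} (-1)^{s+1} q^s/(q^s;q)_{L+1}`,
stated coefficient-wise: both summands have order at least their index, so the coefficient
of `q^N` is the finite sum over indices `≤ N`. -/
theorem stmt17 (L : ℕ) (hL : 1 ≤ L) (N : ℕ) :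
    ∑ n ∈ Finset.Icc 1 N,
        coeff (R := ℚ) N ((X : PowerSeries ℚ) ^ n * (1 + X ^ n)⁻¹ * gb (L + n - 1) (n - 1))
      = ∑ s ∈ Finset.Icc 1 N,
        coeff (R := ℚ) N ((-1) ^ (s + 1) * (X : PowerSeries ℚ) ^ s * (qp s (L + 1))⁻¹) := by
  calc ∑ n ∈ Finset.Icc 1 N,
        coeff (R := ℚ) N ((X : PowerSeries ℚ) ^ n * (1 + X ^ n)⁻¹ * gb (L + n - 1) (n - 1))
      = ∑ n ∈ Finset.Icc 1 N, ∑ s ∈ Finset.Icc 1 N,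
          (-1 : ℚ) ^ (s + 1) * coeff (R := ℚ) N ((X : PowerSeries ℚ) ^ (s * n) * gb (L + n - 1) (n - 1)) :=
        Finset.sum_congr rfl fun n hn =>
          lhs_expand n N (Finset.mem_Icc.mp hn).1 _
    _ = ∑ s ∈ Finset.Icc 1 N, ∑ n ∈ Finset.Icc 1 N,
          (-1 : ℚ) ^ (s + 1) * coeff (R := ℚ) N ((X : PowerSeries ℚ) ^ (s * n) * gb (L + n - 1) (n - 1)) :=
        Finset.sum_comm
    _ = ∑ s ∈ Finset.Icc 1 N,
          (-1 : ℚ) ^ (s + 1) * coeff (R := ℚ) N ((X : PowerSeries ℚ) ^ s * (qp s (L + 1))⁻¹) := by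
        refine Finset.sum_congr rfl fun s hs => ?_
        rw [← Finset.mul_sum, rhs_expand s L N (Finset.mem_Icc.mp hs).1]
    _ = ∑ s ∈ Finset.Icc 1 N,
          coeff (R := ℚ) N ((-1) ^ (s + 1) * (X : PowerSeries ℚ) ^ s * (qp s (L + 1))⁻¹) := by
        refine Finset.sum_congr rfl fun s hs => ?_
        rw [mul_assoc, coeff_neg_one_pow]
end
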